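/- The rearranged image system equals the original: with y₃ > 0, y^I = (y₁,y₂,−y₃), f ∈ ℝ³, f_{xy} = (f₁,f₂,0), f^I = (f₁,f₂,−f₃), the sum u^S + u^D + u^{L1} + u^{L2}, where u^S = J(x,y)f_{xy} − J(x,y^I)f_{xy}, u^D = (x₃∇_x − ê₃)[G^D(x,y^I)·(y₃(−f₁,−f₂,f₃))], u^{L1} = −½(x₃∇_x − ê₃)[G^S(x,y)f₃ − G^S(x,y^I)f₃], u^{L2} = ½∇_x[G^S(x,y)f₃y₃ − G^S(x,y^I)f₃y₃], equals J(x,y)f − J(x,y^I)f^I − (x₃∇_xφ − φê₃) with φ(x) = G^S(x,y^I)(−f₃) + G^D(x,y^I)·(y₃f^I), for all x ∉ {y, y^I}. -/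

import Mathlib

noncomputable section
open scoped Real

/-- Points in ℝ³ with the Euclidean norm. -/
abbrev E3 := EuclideanSpace ℝ (Fin 3)

/-- Build a point of ℝ³ from three coordinates. -/
def mk3 (a b c : ℝ) : E3 := (WithLp.equiv 2 (Fin 3 → ℝ)).symm ![a, b, c]

/-- Partial derivative in the i-th coordinate direction. -/
def pd (i : Fin 3) (f : E3 → ℝ) (x : E3) : ℝ :=
  fderiv ℝ f x (EuclideanSpace.single i 1)

/-- Laplacian. -/
def lap (f : E3 → ℝ) (x : E3) : ℝ := ∑ i : Fin 3, pd i (pd i f) x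

/-- Laplace monopole kernel G^S(x,y) = 1/(4π‖x−y‖). -/
def GS (x y : E3) : ℝ := 1 / (4 * Real.pi * ‖x - y‖)

/-- Laplace dipole kernel G^D(x,y) = (x−y)/(4π‖x−y‖³), j-th component. -/
def GD (x y : E3) (j : Fin 3) : ℝ := (x j - y j) / (4 * Real.pi * ‖x - y‖ ^ 3)

/-- Stokeslet (unit viscosity), (i,j) entry. -/
def J (x y : E3) (i j : Fin 3) : ℝ :=
  (1 / (8 * Real.pi)) *
    ((if i = j then (1 : ℝ) else 0) / ‖x - y‖ +
      (x i - y i) * (x j - y j) / ‖x - y‖ ^ 3)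

/-- Q(x,y) = ∇ₓ G^D(x,y), entries Q_{ij} = ∂_{x_i} G^D_j. -/
def Q (x y : E3) (i j : Fin 3) : ℝ := pd i (fun x => GD x y j) x

/-- Image point below the wall x₃ = 0. -/
def yI (y : E3) : E3 := mk3 (y 0) (y 1) (-(y 2))

/-- Image force. -/
def fI (f : Fin 3 → ℝ) : Fin 3 → ℝ := ![f 0, f 1, -(f 2)]

lemma hasFDerivAt_norm_sub (y x : E3) (h : x ≠ y) :
    HasFDerivAt (fun x : E3 => ‖x - y‖) ((‖x - y‖)⁻¹ • (innerSL ℝ (x - y))) x := by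
  have hne : x - y ≠ 0 := sub_ne_zero.mpr h
  have h1 : HasFDerivAt (fun x : E3 => x - y) (ContinuousLinearMap.id ℝ E3) x :=
    (hasFDerivAt_id x).sub_const y
  have h2 : HasFDerivAt (fun x : E3 => ‖x - y‖ ^ 2)
      (2 • ((innerSL ℝ (x - y)).comp (ContinuousLinearMap.id ℝ E3))) x := h1.norm_sq
  have hsq : ‖x - y‖ ^ 2 ≠ 0 := pow_ne_zero _ (norm_ne_zero_iff.mpr hne)
  have h3 : HasDerivAt Real.sqrt (1 / (2 * Real.sqrt (‖x - y‖ ^ 2))) (‖x - y‖ ^ 2) :=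
    Real.hasDerivAt_sqrt hsq
  have h4 := h3.comp_hasFDerivAt x h2
  have he : (Real.sqrt ∘ fun x : E3 => ‖x - y‖ ^ 2) = fun x : E3 => ‖x - y‖ := by
    funext z; simp [Real.sqrt_sq (norm_nonneg _)]
  rw [he] at h4
  refine h4.congr_fderiv ?_
  rw [Real.sqrt_sq (norm_nonneg _)]
  ext v
  have : ‖x - y‖ ≠ 0 := norm_ne_zero_iff.mpr hne
  simp [smul_smul]
  ring

lemma hasFDerivAt_GS (y x : E3) (h : x ≠ y) :
    HasFDerivAt (fun x : E3 => GS x y)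
      (((4 * Real.pi)⁻¹ * -((‖x - y‖ ^ 2)⁻¹)) • ((‖x - y‖)⁻¹ • (innerSL ℝ (x - y)))) x := by
  have hn : ‖x - y‖ ≠ 0 := norm_ne_zero_iff.mpr (sub_ne_zero.mpr h)
  have h3 : HasDerivAt (fun t : ℝ => (4 * Real.pi)⁻¹ * t⁻¹)
      ((4 * Real.pi)⁻¹ * -((‖x - y‖ ^ 2)⁻¹)) ‖x - y‖ := (hasDerivAt_inv hn).const_mul _
  have h4 := h3.comp_hasFDerivAt x (hasFDerivAt_norm_sub y x h)
  have he : ((fun t : ℝ => (4 * Real.pi)⁻¹ * t⁻¹) ∘ fun x : E3 => ‖x - y‖)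
      = fun x : E3 => GS x y := by
    funext z; simp [GS, Function.comp]; ring
  rwa [he] at h4

lemma pd_GS (y x : E3) (h : x ≠ y) (i : Fin 3) :
    pd i (fun x => GS x y) x = -((x i - y i) / (4 * Real.pi * ‖x - y‖ ^ 3)) := by
  have hn : ‖x - y‖ ≠ 0 := norm_ne_zero_iff.mpr (sub_ne_zero.mpr h)
  have hπ : Real.pi ≠ 0 := Real.pi_ne_zero
  rw [pd, (hasFDerivAt_GS y x h).fderiv]
  have hi : (innerSL ℝ (x - y)) (EuclideanSpace.single i (1:ℝ)) = x i - y i := by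
    simp [EuclideanSpace.inner_single_right]
  simp only [ContinuousLinearMap.smul_apply, hi, smul_eq_mul]
  rw [show ‖x - y‖ ^ 3 = ‖x - y‖ ^ 2 * ‖x - y‖ by ring]
  field_simp

lemma diff_GS (y x : E3) (h : x ≠ y) : DifferentiableAt ℝ (fun x => GS x y) x :=
  (hasFDerivAt_GS y x h).differentiableAt

lemma diff_GD (y x : E3) (h : x ≠ y) (j : Fin 3) :
    DifferentiableAt ℝ (fun x => GD x y j) x := by
  have hn : ‖x - y‖ ≠ 0 := norm_ne_zero_iff.mpr (sub_ne_zero.mpr h)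
  have hj : DifferentiableAt ℝ (fun x : E3 => x j - y j) x :=
    ((EuclideanSpace.proj j : E3 →L[ℝ] ℝ).differentiableAt).sub_const _
  have hd : DifferentiableAt ℝ (fun x : E3 => 4 * Real.pi * ‖x - y‖ ^ 3) x :=
    ((hasFDerivAt_norm_sub y x h).differentiableAt.pow 3).const_mul _
  have hd0 : 4 * Real.pi * ‖x - y‖ ^ 3 ≠ 0 := by positivity
  simp only [GD, div_eq_mul_inv]
  exact hj.mul (hd.inv hd0)

set_option maxHeartbeats 2000000 in
/-- The rearranged (neutral) image system equals the original image system. -/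
theorem stmt11 (y : E3) (hy : y 2 > 0) (f : Fin 3 → ℝ) :
    ∀ x : E3, x ≠ y → x ≠ yI y → ∀ i : Fin 3,
      -- u^S
      ((∑ j : Fin 3, J x y i j * (![f 0, f 1, 0] j))
        - (∑ j : Fin 3, J x (yI y) i j * (![f 0, f 1, 0] j)))
      -- u^D
      + (x 2 * pd i (fun x => ∑ j : Fin 3,
            GD x (yI y) j * (y 2 * (![-(f 0), -(f 1), f 2] j))) x
         - (∑ j : Fin 3, GD x (yI y) j * (y 2 * (![-(f 0), -(f 1), f 2] j)))
           * (if i = 2 then (1 : ℝ) else 0))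
      -- u^{L1}
      + (-(1 / 2) * (x 2 * pd i (fun x => GS x y * f 2 - GS x (yI y) * f 2) x
          - (GS x y * f 2 - GS x (yI y) * f 2) * (if i = 2 then (1 : ℝ) else 0)))
      -- u^{L2}
      + ((1 / 2) * pd i (fun x => GS x y * (f 2 * y 2) - GS x (yI y) * (f 2 * y 2)) x)
      =
      -- original image system
      (∑ j : Fin 3, J x y i j * f j) - (∑ j : Fin 3, J x (yI y) i j * fI f j)
      - (x 2 * pd i (fun x =>
            GS x (yI y) * (-(f 2)) + ∑ j : Fin 3, GD x (yI y) j * (y 2 * fI f j)) x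
         - (GS x (yI y) * (-(f 2)) + ∑ j : Fin 3, GD x (yI y) j * (y 2 * fI f j))
           * (if i = 2 then (1 : ℝ) else 0)) := by
  intro x hxy hxI i
  have hπ : Real.pi ≠ 0 := Real.pi_ne_zero
  have hny : ‖x - y‖ ≠ 0 := norm_ne_zero_iff.mpr (sub_ne_zero.mpr hxy)
  have hnI : ‖x - yI y‖ ≠ 0 := norm_ne_zero_iff.mpr (sub_ne_zero.mpr hxI)
  have hR2 : (yI y) 2 = -(y 2) := by simp [yI, mk3]
  have dGS1 : DifferentiableAt ℝ (fun x => GS x y) x := diff_GS _ _ hxy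
  have dGS2 : DifferentiableAt ℝ (fun x => GS x (yI y)) x := diff_GS _ _ hxI
  have dSum : DifferentiableAt ℝ
      (fun x : E3 => ∑ j : Fin 3, GD x (yI y) j * (y 2 * fI f j)) x := by
    apply DifferentiableAt.fun_sum
    intro j _
    exact (diff_GD _ _ hxI j).mul_const _
  have h1 : pd i (fun x : E3 => ∑ j : Fin 3,
        GD x (yI y) j * (y 2 * (![-(f 0), -(f 1), f 2] j))) x
      = -(pd i (fun x : E3 => ∑ j : Fin 3, GD x (yI y) j * (y 2 * fI f j)) x) := by
    have hfn : (fun x : E3 => ∑ j : Fin 3, GD x (yI y) j * (y 2 * (![-(f 0), -(f 1), f 2] j)))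
        = fun x : E3 => -(∑ j : Fin 3, GD x (yI y) j * (y 2 * fI f j)) := by
      funext z
      simp [fI, Fin.sum_univ_three]
      ring
    rw [pd, pd, hfn, fderiv_fun_neg]
    simp
  have h2 : pd i (fun x : E3 => GS x (yI y) * (-(f 2))
        + ∑ j : Fin 3, GD x (yI y) j * (y 2 * fI f j)) x
      = (-(f 2)) * pd i (fun x => GS x (yI y)) x
        + pd i (fun x : E3 => ∑ j : Fin 3, GD x (yI y) j * (y 2 * fI f j)) x := by
    rw [pd, pd, pd, fderiv_fun_add (dGS2.mul_const _) dSum, fderiv_mul_const dGS2]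
    simp only [ContinuousLinearMap.add_apply, ContinuousLinearMap.smul_apply, smul_eq_mul]
  have h3 : pd i (fun x => GS x y * f 2 - GS x (yI y) * f 2) x
      = f 2 * pd i (fun x => GS x y) x - f 2 * pd i (fun x => GS x (yI y)) x := by
    rw [pd, pd, pd, fderiv_fun_sub (dGS1.mul_const _) (dGS2.mul_const _),
      fderiv_mul_const dGS1, fderiv_mul_const dGS2]
    simp only [ContinuousLinearMap.sub_apply, ContinuousLinearMap.smul_apply, smul_eq_mul]
  have h4 : pd i (fun x => GS x y * (f 2 * y 2) - GS x (yI y) * (f 2 * y 2)) x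
      = (f 2 * y 2) * pd i (fun x => GS x y) x
        - (f 2 * y 2) * pd i (fun x => GS x (yI y)) x := by
    rw [pd, pd, pd, fderiv_fun_sub (dGS1.mul_const _) (dGS2.mul_const _),
      fderiv_mul_const dGS1, fderiv_mul_const dGS2]
    simp only [ContinuousLinearMap.sub_apply, ContinuousLinearMap.smul_apply, smul_eq_mul]
  rw [h1, h2, h3, h4, pd_GS y x hxy i, pd_GS (yI y) x hxI i]
  generalize pd i (fun x : E3 => ∑ j : Fin 3, GD x (yI y) j * (y 2 * fI f j)) x = P
  fin_cases i <;>
  · simp only [J, GS, GD, fI, Fin.sum_univ_three, Matrix.cons_val_zero, Matrix.cons_val_one,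
      Matrix.head_cons, hR2, Matrix.cons_val_two, Matrix.tail_cons, Fin.isValue,
      Fin.zero_eta, Fin.mk_one, Fin.reduceFinMk, Fin.reduceEq, if_true, if_false, reduceIte]
    field_simp
    ring
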